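/- For fixed l = n−k, the Hankel determinant det[binom(2l, l+i−j)]_{i,j=1,…,k} equals the triple product ∏_{h=1}^{l} ∏_{i=1}^{k} ∏_{j=1}^{l} (h+i+j−1)/(h+i+j−2). -/

import Mathlib

open Finset

/-- superfactorial: product of factorials `0! ⋯ (n-1)!` as a rational. -/
def sf (n : ℕ) : ℚ := ∏ a ∈ Finset.range n, (Nat.factorial a : ℚ)

lemma sf_succ (n : ℕ) : sf (n + 1) = sf n * (Nat.factorial n : ℚ) := by
  simp [sf, Finset.prod_range_succ]

lemma sf_pos (n : ℕ) : 0 < sf n := by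
  apply Finset.prod_pos
  intro a _
  exact_mod_cast Nat.factorial_pos a

lemma sf_ne_zero (n : ℕ) : sf n ≠ 0 := ne_of_gt (sf_pos n)

lemma fact_pos (n : ℕ) : (0:ℚ) < (Nat.factorial n : ℚ) := by exact_mod_cast Nat.factorial_pos n
lemma fact_ne_zero (n : ℕ) : (Nat.factorial n : ℚ) ≠ 0 := ne_of_gt (fact_pos n)

/-- the product formula for the determinant, parametrized so that no natural
subtraction appears: `u + v = 2l`, `u = m`. -/
def gQ (u v k : ℕ) : ℚ :=
  sf (u + v + k) * sf u * sf v * sf k / (sf (v + k) * sf (u + v) * sf (u + k))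

lemma gQ_pos (u v k : ℕ) : 0 < gQ u v k := by
  unfold gQ
  apply div_pos
  · exact mul_pos (mul_pos (mul_pos (sf_pos _) (sf_pos _)) (sf_pos _)) (sf_pos _)
  · exact mul_pos (mul_pos (sf_pos _) (sf_pos _)) (sf_pos _)

lemma gQ_ne_zero (u v k : ℕ) : gQ u v k ≠ 0 := ne_of_gt (gQ_pos u v k)

lemma gQ_zero_k (u v : ℕ) : gQ u v 0 = 1 := by
  unfold gQ
  rw [Nat.add_zero, Nat.add_zero, Nat.add_zero]
  have h1 := sf_ne_zero (u+v); have h2 := sf_ne_zero u; have h3 := sf_ne_zero v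
  have : sf 0 = 1 := by simp [sf]
  rw [this]; field_simp [sf_ne_zero]

lemma gQ_zero_u (v k : ℕ) : gQ 0 v k = 1 := by
  unfold gQ
  have : sf 0 = 1 := by simp [sf]
  simp only [Nat.zero_add, this]
  field_simp [sf_ne_zero]

lemma gQ_zero_v (u k : ℕ) : gQ u 0 k = 1 := by
  unfold gQ
  have : sf 0 = 1 := by simp [sf]
  simp only [Nat.add_zero, Nat.zero_add, this]
  field_simp [sf_ne_zero]

lemma gQ_succ (u v k : ℕ) :
    gQ u v (k+1) * ((Nat.factorial (v+k) : ℚ) * (Nat.factorial (u+k) : ℚ))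
      = gQ u v k * ((Nat.factorial (u+v+k) : ℚ) * (Nat.factorial k : ℚ)) := by
  unfold gQ
  rw [show u + v + (k+1) = (u+v+k)+1 by omega, sf_succ,
      show v + (k+1) = (v+k)+1 by omega, sf_succ,
      show u + (k+1) = (u+k)+1 by omega, sf_succ, sf_succ]
  field_simp [sf_ne_zero, fact_ne_zero]

lemma sf3_ne (a b c : ℕ) : sf a * sf b * sf c ≠ 0 :=
  mul_ne_zero (mul_ne_zero (sf_ne_zero a) (sf_ne_zero b)) (sf_ne_zero c)

lemma gQ_corner (s r K : ℕ) :
    gQ (s+2) r K * gQ s (r+2) K * (((s:ℚ)+(K:ℚ)+1) * ((r:ℚ)+(K:ℚ)+1))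
      = gQ (s+1) (r+1) K ^ 2 * (((s:ℚ)+1) * ((r:ℚ)+1)) := by
  unfold gQ
  rw [show s+2+r+K = s+r+K+2 by omega, show s+(r+2)+K = s+r+K+2 by omega,
      show s+1+(r+1)+K = s+r+K+2 by omega,
      show s+2+r = s+r+2 by omega, show s+(r+2) = s+r+2 by omega,
      show s+1+(r+1) = s+r+2 by omega,
      show s+2+K = s+K+1+1 by omega, show r+2+K = r+K+1+1 by omega,
      show s+1+K = s+K+1 by omega, show r+1+K = r+K+1 by omega,
      show s+2 = s+1+1 by omega, show r+2 = r+1+1 by omega]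
  rw [div_mul_div_comm, div_mul_eq_mul_div, div_pow, div_mul_eq_mul_div,
      div_eq_div_iff (mul_ne_zero (sf3_ne _ _ _) (sf3_ne _ _ _)) (pow_ne_zero _ (sf3_ne _ _ _))]
  simp only [sf_succ, Nat.factorial_succ]
  push_cast
  ring

lemma gQ_master (s r k : ℕ) :
    gQ (s+1) (r+1) (k+2) * gQ (s+1) (r+1) k
      = gQ (s+1) (r+1) (k+1) ^ 2 - gQ (s+2) r (k+1) * gQ s (r+2) (k+1) := by
  have h1 := gQ_succ (s+1) (r+1) k
  have h2 := gQ_succ (s+1) (r+1) (k+1)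
  have h3 := gQ_corner s r (k+1)
  rw [show r+1+k = r+k+1 by omega, show s+1+k = s+k+1 by omega,
      show s+1+(r+1)+k = s+r+k+2 by omega] at h1
  rw [show r+1+(k+1) = r+k+2 by omega, show s+1+(k+1) = s+k+2 by omega,
      show s+1+(r+1)+(k+1) = s+r+k+3 by omega, show k+1+1 = k+2 by omega] at h2
  push_cast at h3
  have hB : ((Nat.factorial (s+r+k+2) : ℚ) * (Nat.factorial k : ℚ)) ≠ 0 :=
    mul_ne_zero (fact_ne_zero _) (fact_ne_zero _)
  have hA' : ((Nat.factorial (r+k+2) : ℚ) * (Nat.factorial (s+k+2) : ℚ)) ≠ 0 :=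
    mul_ne_zero (fact_ne_zero _) (fact_ne_zero _)
  have hs2 : ((s:ℚ)+(k:ℚ)+2) ≠ 0 := by positivity
  have hr2 : ((r:ℚ)+(k:ℚ)+2) ≠ 0 := by positivity
  have e0 : gQ (s+1) (r+1) k
      = gQ (s+1) (r+1) (k+1) * ((Nat.factorial (r+k+1) : ℚ) * (Nat.factorial (s+k+1) : ℚ))
        / ((Nat.factorial (s+r+k+2) : ℚ) * (Nat.factorial k : ℚ)) := by
    rw [eq_div_iff hB]; linear_combination -h1
  have e2 : gQ (s+1) (r+1) (k+2)
      = gQ (s+1) (r+1) (k+1) * ((Nat.factorial (s+r+k+3) : ℚ) * (Nat.factorial (k+1) : ℚ))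
        / ((Nat.factorial (r+k+2) : ℚ) * (Nat.factorial (s+k+2) : ℚ)) := by
    rw [eq_div_iff hA']; linear_combination h2
  have e3 : gQ (s+2) r (k+1) * gQ s (r+2) (k+1)
      = gQ (s+1) (r+1) (k+1) ^ 2 * (((s:ℚ)+1) * ((r:ℚ)+1))
        / (((s:ℚ)+(k:ℚ)+2) * ((r:ℚ)+(k:ℚ)+2)) := by
    rw [eq_div_iff (mul_ne_zero hs2 hr2)]; linear_combination h3
  rw [e0, e2, e3,
      show s+r+k+3 = (s+r+k+2)+1 by omega, show r+k+2 = (r+k+1)+1 by omega,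
      show s+k+2 = (s+k+1)+1 by omega]
  simp only [Nat.factorial_succ]
  push_cast
  field_simp [fact_ne_zero]
  ring

/-- The entry function: `binom(2l, m)` for `m ≥ 0`, else `0`. -/
def Ee (l : ℕ) (m : ℤ) : ℚ := if 0 ≤ m then ((2*l).choose m.toNat : ℚ) else 0

/-- The `n×n` Toeplitz matrix of binomial coefficients with shift `m`. -/
def Tm (l : ℕ) (m : ℤ) (n : ℕ) : Matrix (Fin n) (Fin n) ℚ :=
  Matrix.of fun i j => Ee l (m + (i : ℤ) - (j : ℤ))

lemma det_Tm_one (l : ℕ) (m : ℤ) : (Tm l m 1).det = Ee l m := by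
  rw [Matrix.det_fin_one]
  simp [Tm]

lemma Ee_hi (l : ℕ) (m : ℤ) (h : (2*l : ℤ) < m) : Ee l m = 0 := by
  unfold Ee
  rw [if_pos (by omega)]
  norm_cast
  exact Nat.choose_eq_zero_of_lt (by omega)

lemma det_Tm_hi (l : ℕ) (m : ℤ) (n : ℕ) (h : (2*l : ℤ) < m) (hn : 1 ≤ n) :
    (Tm l m n).det = 0 := by
  have ht : (Tm l m n).BlockTriangular id := by
    intro i j hij
    simp only [id_eq] at hij
    have : (j : ℤ) < (i : ℤ) := by exact_mod_cast hij
    exact Ee_hi l _ (by omega)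
  rw [Matrix.det_of_upperTriangular ht]
  apply Finset.prod_eq_zero (Finset.mem_univ (⟨0, by omega⟩ : Fin n))
  show Tm l m n _ _ = 0
  unfold Tm
  simp only [Matrix.of_apply, sub_self, add_sub_cancel_right]
  exact Ee_hi l m h

lemma Ee_lo (l : ℕ) (m : ℤ) (h : m < 0) : Ee l m = 0 := by
  unfold Ee
  rw [if_neg (by omega)]

lemma det_Tm_lo (l : ℕ) (m : ℤ) (n : ℕ) (h : m < 0) (hn : 1 ≤ n) :
    (Tm l m n).det = 0 := by
  have ht : (Tm l m n).BlockTriangular OrderDual.toDual := by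
    intro i j hij
    have : (i : ℤ) < (j : ℤ) := by exact_mod_cast hij
    exact Ee_lo l _ (by omega)
  rw [Matrix.det_of_lowerTriangular _ ht]
  apply Finset.prod_eq_zero (Finset.mem_univ (⟨0, by omega⟩ : Fin n))
  show Tm l m n _ _ = 0
  unfold Tm
  simp only [Matrix.of_apply, sub_self, add_sub_cancel_right]
  exact Ee_lo l m h

open Matrix in
/-- Desnanot–Jacobi style identity around an invertible central block. -/
lemma dj {n : ℕ} (M : Matrix (Fin n) (Fin n) ℚ) (B : Matrix (Fin n) (Fin 2) ℚ)
    (C : Matrix (Fin 2) (Fin n) ℚ) (D : Matrix (Fin 2) (Fin 2) ℚ) [Invertible M] :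
    (fromBlocks M B C D).det * M.det
      = (fromBlocks M (of fun i (_ : Unit) => B i 0) (of fun (_ : Unit) j => C 0 j)
            (of fun (_ : Unit) (_ : Unit) => D 0 0)).det
          * (fromBlocks M (of fun i (_ : Unit) => B i 1) (of fun (_ : Unit) j => C 1 j)
            (of fun (_ : Unit) (_ : Unit) => D 1 1)).det
        - (fromBlocks M (of fun i (_ : Unit) => B i 1) (of fun (_ : Unit) j => C 0 j)
            (of fun (_ : Unit) (_ : Unit) => D 0 1)).det
          * (fromBlocks M (of fun i (_ : Unit) => B i 0) (of fun (_ : Unit) j => C 1 j)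
            (of fun (_ : Unit) (_ : Unit) => D 1 0)).det := by
  have key : ∀ (p q : Fin 2),
      (fromBlocks M (of fun i (_ : Unit) => B i q) (of fun (_ : Unit) j => C p j)
        (of fun (_ : Unit) (_ : Unit) => D p q)).det
      = M.det * (D - C * ⅟M * B) p q := by
    intro p q
    rw [Matrix.det_fromBlocks₁₁]
    congr 1
    rw [Matrix.det_unique]
    simp [Matrix.mul_apply, Matrix.sub_apply, Finset.sum_mul, Finset.mul_sum]
  rw [Matrix.det_fromBlocks₁₁, key 0 0, key 0 1, key 1 0, key 1 1, Matrix.det_fin_two]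
  ring

/-- `Fin n ⊕ Unit ≃ Fin (n+1)` sending `inl i` to `i+1` and `inr` to `0`. -/
def eq0 (n : ℕ) : Fin n ⊕ Unit ≃ Fin (n+1) where
  toFun := Sum.elim Fin.succ (fun _ => 0)
  invFun := fun x => Fin.cases (Sum.inr ()) (fun i => Sum.inl i) x
  left_inv := by rintro (i | ⟨⟩) <;> simp
  right_inv := by
    intro x
    induction x using Fin.cases <;> simp

/-- `Fin n ⊕ Unit ≃ Fin (n+1)` sending `inl i` to `i` and `inr` to `n`. -/
def eq1 (n : ℕ) : Fin n ⊕ Unit ≃ Fin (n+1) where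
  toFun := Sum.elim Fin.castSucc (fun _ => Fin.last n)
  invFun := fun x => Fin.lastCases (Sum.inr ()) (fun i => Sum.inl i) x
  left_inv := by rintro (i | ⟨⟩) <;> simp
  right_inv := by
    intro x
    induction x using Fin.lastCases <;> simp

/-- `Fin n ⊕ Fin 2 ≃ Fin (n+2)` sending `inl i` to `i+1`, `inr 0` to `0`, `inr 1` to `n+1`. -/
def eqB (n : ℕ) : Fin n ⊕ Fin 2 ≃ Fin (n+2) where
  toFun := Sum.elim (fun i => i.castSucc.succ)
    (fun q => if q = 0 then (0 : Fin (n+2)) else Fin.last (n+1))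
  invFun := fun x => Fin.cases (Sum.inr 0)
    (fun y => Fin.lastCases (Sum.inr 1) (fun i => Sum.inl i) y) x
  left_inv := by
    rintro (i | q)
    · simp
    · fin_cases q
      · simp
      · simp [← Fin.succ_last]
  right_inv := by
    intro x
    induction x using Fin.cases with
    | zero => simp
    | succ y =>
      induction y using Fin.lastCases with
      | last => simp [← Fin.succ_last]
      | cast i => simp

open Matrix Equiv in
lemma condT (l : ℕ) (n : ℕ) (m : ℤ) (h : IsUnit (Tm l m n).det) :
    (Tm l m (n+2)).det * (Tm l m n).det
      = (Tm l m (n+1)).det ^ 2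
        - (Tm l (m-1) (n+1)).det * (Tm l (m+1) (n+1)).det := by
  haveI := (Tm l m n).invertibleOfIsUnitDet h
  set B : Matrix (Fin n) (Fin 2) ℚ :=
    Matrix.of (fun i q => Ee l (m + ((i:ℤ)+1) - (if q = 0 then 0 else (n:ℤ)+1))) with hB
  set C : Matrix (Fin 2) (Fin n) ℚ :=
    Matrix.of (fun q j => Ee l (m + (if q = 0 then 0 else (n:ℤ)+1) - ((j:ℤ)+1))) with hC
  set D : Matrix (Fin 2) (Fin 2) ℚ :=
    Matrix.of (fun q q' => Ee l (m + (if q = 0 then 0 else (n:ℤ)+1)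
      - (if q' = 0 then 0 else (n:ℤ)+1))) with hD
  have hA : (Tm l m (n+2)).submatrix (eqB n) (eqB n) = Matrix.fromBlocks (Tm l m n) B C D := by
    ext x y
    rcases x with i | q <;> rcases y with j | q' <;>
      [skip; fin_cases q'; fin_cases q; (fin_cases q <;> fin_cases q')] <;>
    · simp only [Matrix.submatrix_apply, eqB, Equiv.coe_fn_mk, Sum.elim_inl, Sum.elim_inr, Tm,
        Matrix.of_apply, Matrix.fromBlocks_apply₁₁, Matrix.fromBlocks_apply₁₂,
        Matrix.fromBlocks_apply₂₁, Matrix.fromBlocks_apply₂₂, hB, hC, hD, Fin.val_last,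
        Fin.isValue]
      first
      | rfl
      | (congr 1
         push_cast [Fin.val_succ, Fin.coe_castSucc, Fin.val_last]
         first
         | ring
         | norm_num)
  have hdet2 : (Matrix.fromBlocks (Tm l m n) B C D).det = (Tm l m (n+2)).det := by
    rw [← hA]; exact Matrix.det_submatrix_equiv_self (eqB n) _
  set σ : Equiv.Perm (Fin n ⊕ Unit) := (eq1 n).trans (eq0 n).symm with hσ
  set τ : Equiv.Perm (Fin n ⊕ Unit) := (eq0 n).trans (eq1 n).symm with hτ
  have hστ : τ = σ⁻¹ := by
    rw [hσ, hτ]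
    rfl
  have d00 : (Matrix.fromBlocks (Tm l m n) (Matrix.of fun i (_ : Unit) => B i 0)
      (Matrix.of fun (_ : Unit) j => C 0 j) (Matrix.of fun (_ : Unit) (_ : Unit) => D 0 0)).det
      = (Tm l m (n+1)).det := by
    have e : Matrix.fromBlocks (Tm l m n) (Matrix.of fun i (_ : Unit) => B i 0)
        (Matrix.of fun (_ : Unit) j => C 0 j) (Matrix.of fun (_ : Unit) (_ : Unit) => D 0 0)
        = (Tm l m (n+1)).submatrix (eq0 n) (eq0 n) := by
      ext x y
      rcases x with i | u <;> rcases y with j | u' <;>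
      · simp only [Matrix.submatrix_apply, eq0, Equiv.coe_fn_mk, Sum.elim_inl, Sum.elim_inr, Tm,
          Matrix.of_apply, Matrix.fromBlocks_apply₁₁, Matrix.fromBlocks_apply₁₂,
          Matrix.fromBlocks_apply₂₁, Matrix.fromBlocks_apply₂₂, hB, hC, hD, Fin.isValue,
          if_pos, Fin.val_zero]
        all_goals try rfl
        all_goals congr 1
        all_goals try simp only [if_neg (one_ne_zero)]
        all_goals push_cast [Fin.val_succ, Fin.val_last, Fin.coe_castSucc, Fin.val_zero]
        all_goals first
        | rfl
        | ring
        | omega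
    rw [e]
    exact Matrix.det_submatrix_equiv_self (eq0 n) _
  have d11 : (Matrix.fromBlocks (Tm l m n) (Matrix.of fun i (_ : Unit) => B i 1)
      (Matrix.of fun (_ : Unit) j => C 1 j) (Matrix.of fun (_ : Unit) (_ : Unit) => D 1 1)).det
      = (Tm l m (n+1)).det := by
    have e : Matrix.fromBlocks (Tm l m n) (Matrix.of fun i (_ : Unit) => B i 1)
        (Matrix.of fun (_ : Unit) j => C 1 j) (Matrix.of fun (_ : Unit) (_ : Unit) => D 1 1)
        = (Tm l m (n+1)).submatrix (eq1 n) (eq1 n) := by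
      ext x y
      rcases x with i | u <;> rcases y with j | u' <;>
      · simp only [Matrix.submatrix_apply, eq1, Equiv.coe_fn_mk, Sum.elim_inl, Sum.elim_inr, Tm,
          Matrix.of_apply, Matrix.fromBlocks_apply₁₁, Matrix.fromBlocks_apply₁₂,
          Matrix.fromBlocks_apply₂₁, Matrix.fromBlocks_apply₂₂, hB, hC, hD, Fin.isValue,
          Fin.val_last, Fin.coe_castSucc]
        all_goals try rfl
        all_goals congr 1
        all_goals try simp only [if_neg (one_ne_zero)]
        all_goals push_cast [Fin.val_succ, Fin.val_last, Fin.coe_castSucc, Fin.val_zero]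
        all_goals first
        | rfl
        | ring
        | omega
    rw [e]
    exact Matrix.det_submatrix_equiv_self (eq1 n) _
  have hcol : ∀ y, eq0 n (σ y) = eq1 n y := fun y => (eq0 n).apply_symm_apply _
  have hcol' : ∀ y, eq1 n (τ y) = eq0 n y := fun y => (eq1 n).apply_symm_apply _
  have d01 : (Matrix.fromBlocks (Tm l m n) (Matrix.of fun i (_ : Unit) => B i 1)
      (Matrix.of fun (_ : Unit) j => C 0 j) (Matrix.of fun (_ : Unit) (_ : Unit) => D 0 1)).det
      = ((Equiv.Perm.sign σ : ℤ) : ℚ) * (Tm l (m-1) (n+1)).det := by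
    have e : Matrix.fromBlocks (Tm l m n) (Matrix.of fun i (_ : Unit) => B i 1)
        (Matrix.of fun (_ : Unit) j => C 0 j) (Matrix.of fun (_ : Unit) (_ : Unit) => D 0 1)
        = ((Tm l (m-1) (n+1)).submatrix (eq0 n) (eq0 n)).submatrix id σ := by
      ext x y
      rcases x with i | u <;> rcases y with j | u' <;>
      · simp only [Matrix.submatrix_apply, id_eq, hcol]
        try simp only [eq0, eq1, Equiv.coe_fn_mk, Sum.elim_inl, Sum.elim_inr, Tm,
          Matrix.of_apply, Matrix.fromBlocks_apply₁₁, Matrix.fromBlocks_apply₁₂,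
          Matrix.fromBlocks_apply₂₁, Matrix.fromBlocks_apply₂₂, hB, hC, hD, Fin.isValue,
          Fin.val_last, Fin.coe_castSucc]
        all_goals try rfl
        all_goals congr 1
        all_goals try simp only [if_neg (one_ne_zero)]
        all_goals push_cast [Fin.val_succ, Fin.val_last, Fin.coe_castSucc, Fin.val_zero]
        all_goals first
        | rfl
        | ring
        | omega
    rw [e, Matrix.det_permute' σ, Matrix.det_submatrix_equiv_self (eq0 n)]
  have d10 : (Matrix.fromBlocks (Tm l m n) (Matrix.of fun i (_ : Unit) => B i 0)
      (Matrix.of fun (_ : Unit) j => C 1 j) (Matrix.of fun (_ : Unit) (_ : Unit) => D 1 0)).det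
      = ((Equiv.Perm.sign τ : ℤ) : ℚ) * (Tm l (m+1) (n+1)).det := by
    have e : Matrix.fromBlocks (Tm l m n) (Matrix.of fun i (_ : Unit) => B i 0)
        (Matrix.of fun (_ : Unit) j => C 1 j) (Matrix.of fun (_ : Unit) (_ : Unit) => D 1 0)
        = ((Tm l (m+1) (n+1)).submatrix (eq1 n) (eq1 n)).submatrix id τ := by
      ext x y
      rcases x with i | u <;> rcases y with j | u' <;>
      · simp only [Matrix.submatrix_apply, id_eq, hcol']
        try simp only [eq0, eq1, Equiv.coe_fn_mk, Sum.elim_inl, Sum.elim_inr, Tm,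
          Matrix.of_apply, Matrix.fromBlocks_apply₁₁, Matrix.fromBlocks_apply₁₂,
          Matrix.fromBlocks_apply₂₁, Matrix.fromBlocks_apply₂₂, hB, hC, hD, Fin.isValue,
          Fin.val_last, Fin.coe_castSucc]
        all_goals try rfl
        all_goals congr 1
        all_goals try simp only [if_neg (one_ne_zero)]
        all_goals push_cast [Fin.val_succ, Fin.val_last, Fin.coe_castSucc, Fin.val_zero]
        all_goals first
        | rfl
        | ring
        | omega
    rw [e, Matrix.det_permute' τ, Matrix.det_submatrix_equiv_self (eq1 n)]
  have hs : ((Equiv.Perm.sign σ : ℤ) : ℚ) * ((Equiv.Perm.sign τ : ℤ) : ℚ) = 1 := by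
    rw [hστ, ← Int.cast_mul, ← Units.val_mul, Equiv.Perm.sign_inv, Int.units_mul_self]
    norm_num
  have ddj := dj (Tm l m n) B C D
  rw [hdet2, d00, d11, d01, d10] at ddj
  linear_combination ddj - (Tm l (m-1) (n+1)).det * (Tm l (m+1) (n+1)).det * hs



/-- The closed product formula, extended by `1` for `k = 0` and by `0` out of range. -/
def g (l k : ℕ) (m : ℤ) : ℚ :=
  if k = 0 then 1
  else if 0 ≤ m ∧ m ≤ 2*l then gQ m.toNat (2*l - m.toNat) k else 0

lemma g_in (l k : ℕ) (m : ℤ) (h0 : 0 ≤ m) (h2 : m ≤ 2*l) :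
    g l k m = gQ m.toNat (2*l - m.toNat) k := by
  unfold g
  rcases eq_or_ne k 0 with hk | hk
  · rw [if_pos hk, hk, gQ_zero_k]
  · rw [if_neg hk, if_pos ⟨h0, h2⟩]

lemma g_out (l k : ℕ) (m : ℤ) (hk : k ≠ 0) (h : m < 0 ∨ (2*l : ℤ) < m) :
    g l k m = 0 := by
  unfold g
  rw [if_neg hk, if_neg (by omega)]

lemma g_zero (l : ℕ) (m : ℤ) : g l 0 m = 1 := by simp [g]

lemma gQ_one (u v : ℕ) : gQ u v 1 = (((u+v).choose u : ℕ) : ℚ) := by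
  have key : (((u+v).choose u : ℕ) : ℚ) * (u.factorial : ℚ) * (v.factorial : ℚ)
      = ((u+v).factorial : ℚ) := by
    have h := Nat.choose_mul_factorial_mul_factorial (Nat.le_add_right u v)
    rw [Nat.add_sub_cancel_left] at h
    exact_mod_cast congrArg (Nat.cast : ℕ → ℚ) h
  have hs1 : sf 1 = 1 := by simp [sf]
  unfold gQ
  rw [sf_succ (u+v), show v + 1 = v+1 from rfl, sf_succ v, sf_succ u, hs1]
  field_simp [sf_ne_zero, fact_ne_zero]
  linear_combination (-1 : ℚ) * key

lemma g_one (l : ℕ) (m : ℤ) : g l 1 m = Ee l m := by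
  by_cases h0 : 0 ≤ m
  · by_cases h2 : m ≤ 2*l
    · rw [g_in l 1 m h0 h2, gQ_one, show m.toNat + (2*l - m.toNat) = 2*l by omega]
      unfold Ee
      rw [if_pos h0]
    · rw [g_out l 1 m one_ne_zero (Or.inr (by omega))]
      rw [Ee_hi l m (by omega)]
  · rw [g_out l 1 m one_ne_zero (Or.inl (by omega))]
    rw [Ee_lo l m (by omega)]

lemma gIdent (l k : ℕ) (m : ℤ) :
    g l (k+2) m * g l k m
      = g l (k+1) m ^ 2 - g l (k+1) (m-1) * g l (k+1) (m+1) := by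
  by_cases h0 : 0 ≤ m
  · by_cases h2 : m ≤ 2*l
    · by_cases hm0 : m = 0
      · subst hm0
        rw [g_in l (k+2) 0 le_rfl h2, g_in l k 0 le_rfl h2, g_in l (k+1) 0 le_rfl h2,
            g_out l (k+1) (0-1) (Nat.succ_ne_zero k) (Or.inl (by omega))]
        simp only [Int.toNat_zero, Nat.sub_zero, gQ_zero_u]
        norm_num
      · by_cases hm2 : m = 2*l
        · rw [g_in l (k+2) m h0 h2, g_in l k m h0 h2, g_in l (k+1) m h0 h2,
              g_out l (k+1) (m+1) (Nat.succ_ne_zero k) (Or.inr (by omega))]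
          rw [show m.toNat = 2*l by omega, show 2*l - 2*l = 0 by omega]
          simp only [gQ_zero_v]
          norm_num
        · -- interior case
          obtain ⟨s, hs⟩ : ∃ s, m.toNat = s + 1 := ⟨m.toNat - 1, by omega⟩
          obtain ⟨r, hr⟩ : ∃ r, 2*l - m.toNat = r + 1 := ⟨2*l - m.toNat - 1, by omega⟩
          rw [g_in l (k+2) m h0 h2, g_in l k m h0 h2, g_in l (k+1) m h0 h2,
              g_in l (k+1) (m-1) (by omega) (by omega),
              g_in l (k+1) (m+1) (by omega) (by omega)]
          rw [hs, show 2*l - (s+1) = r + 1 by omega, show (m-1).toNat = s by omega,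
              show 2*l - s = r + 2 by omega,
              show (m+1).toNat = s+2 by omega, show 2*l - (s+2) = r by omega]
          rw [mul_comm (gQ s (r+2) (k+1)) (gQ (s+2) r (k+1))]
          exact gQ_master s r k
    · rw [g_out l (k+2) m (by omega) (Or.inr (by omega)),
          g_out l (k+1) m (by omega) (Or.inr (by omega)),
          g_out l (k+1) (m+1) (by omega) (Or.inr (by omega))]
      norm_num
  · rw [g_out l (k+2) m (by omega) (Or.inl (by omega)),
        g_out l (k+1) m (by omega) (Or.inl (by omega)),
        g_out l (k+1) (m-1) (by omega) (Or.inl (by omega))]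
    norm_num

lemma g_ne_zero_in (l k : ℕ) (m : ℤ) (h0 : 0 ≤ m) (h2 : m ≤ 2*l) : g l k m ≠ 0 := by
  rw [g_in l k m h0 h2]
  exact gQ_ne_zero _ _ _

lemma main (l : ℕ) : ∀ n, ∀ m : ℤ, (Tm l m (n+1)).det = g l (n+1) m := by
  intro n
  induction n using Nat.strong_induction_on with
  | _ n ih =>
    intro m
    cases n with
    | zero =>
      rw [det_Tm_one, g_one]
    | succ n' =>
      by_cases h0 : 0 ≤ m
      · by_cases h2 : m ≤ 2*l
        · -- in range: condensation
          have hTn' : (Tm l m n').det = g l n' m := by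
            cases n' with
            | zero =>
              rw [g_zero]
              exact Matrix.det_isEmpty
            | succ n'' => exact ih n'' (by omega) m
          have hu : IsUnit (Tm l m n').det := by
            rw [hTn']
            cases n' with
            | zero => rw [g_zero]; exact isUnit_one
            | succ n'' => exact (g_ne_zero_in l (n''+1) m h0 h2).isUnit
          have hc := condT l n' m hu
          rw [hTn', ih n' (by omega) m, ih n' (by omega) (m-1), ih n' (by omega) (m+1)] at hc
      -- hc : det (Tm l m (n'+2)) * g l n' m = g l (n'+1) m ^2 - g (m-1) * g (m+1)
          have hg := gIdent l n' m
          have hgn : g l n' m ≠ 0 := by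
            cases n' with
            | zero => rw [g_zero]; exact one_ne_zero
            | succ n'' => exact g_ne_zero_in l (n''+1) m h0 h2
          have : (Tm l m (n'+1+1)).det * g l n' m = g l (n'+2) m * g l n' m := by
            rw [hc, hg]
          exact mul_right_cancel₀ hgn this
        · rw [det_Tm_hi l m (n'+2) (by omega) (by omega),
              g_out l (n'+2) m (by omega) (Or.inr (by omega))]
      · rw [det_Tm_lo l m (n'+2) (by omega) (by omega),
            g_out l (n'+2) m (by omega) (Or.inl (by omega))]

lemma prodIcc (a : ℕ) : ∀ l : ℕ, ∏ j ∈ Finset.Icc 1 l, ((a:ℚ) + (j:ℚ))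
    = ((a+l).factorial : ℚ) / (a.factorial : ℚ)
  | 0 => by
    simp only [Finset.Icc_eq_empty (by omega : ¬ (1:ℕ) ≤ 0), Finset.prod_empty, Nat.add_zero]
    exact (div_self (fact_ne_zero a)).symm
  | (l+1) => by
    rw [Finset.prod_Icc_succ_top (by omega), prodIcc a l,
        show a + (l+1) = (a+l)+1 by omega, Nat.factorial_succ]
    field_simp [fact_ne_zero]
    push_cast
    ring

lemma tele (i j : ℕ) (hi : 1 ≤ i) (hj : 1 ≤ j) :
    ∀ l : ℕ, (∏ h ∈ Finset.Icc 1 l, (((h:ℚ)+(i:ℚ)+(j:ℚ)-1)/((h:ℚ)+(i:ℚ)+(j:ℚ)-2)))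
      = ((l:ℚ)+(i:ℚ)+(j:ℚ)-1)/((i:ℚ)+(j:ℚ)-1)
  | 0 => by
    have h1 : ((i:ℚ))+(j:ℚ)-1 ≠ 0 := by
      have : (1:ℚ) ≤ (i:ℚ) := by exact_mod_cast hi
      have : (1:ℚ) ≤ (j:ℚ) := by exact_mod_cast hj
      nlinarith
    simp only [Finset.Icc_eq_empty (by omega : ¬ (1:ℕ) ≤ 0), Finset.prod_empty, Nat.cast_zero]
    rw [zero_add, div_self h1]
  | (l+1) => by
    have h1 : ((i:ℚ))+(j:ℚ)-1 ≠ 0 := by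
      have : (1:ℚ) ≤ (i:ℚ) := by exact_mod_cast hi
      have : (1:ℚ) ≤ (j:ℚ) := by exact_mod_cast hj
      nlinarith
    have h2 : ((l:ℚ))+(i:ℚ)+(j:ℚ)-1 ≠ 0 := by
      have : (1:ℚ) ≤ (i:ℚ) := by exact_mod_cast hi
      have : (1:ℚ) ≤ (j:ℚ) := by exact_mod_cast hj
      have : (0:ℚ) ≤ (l:ℚ) := by positivity
      nlinarith
    rw [Finset.prod_Icc_succ_top (by omega), tele i j hi hj l]
    push_cast
    have h3 : ((l:ℚ)+1+(i:ℚ)+(j:ℚ)-2) ≠ 0 := by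
      intro hc; apply h2; linarith
    rw [div_mul_div_comm, div_eq_div_iff (mul_ne_zero h1 h3) h1]
    ring

lemma prodK (l : ℕ) : ∀ k : ℕ,
    (∏ i ∈ Finset.Icc 1 k, ∏ j ∈ Finset.Icc 1 l,
      (((l:ℚ)+(i:ℚ)+(j:ℚ)-1)/((i:ℚ)+(j:ℚ)-1))) = gQ l l k
  | 0 => by
    simp only [Finset.Icc_eq_empty (by omega : ¬ (1:ℕ) ≤ 0), Finset.prod_empty]
    exact (gQ_zero_k l l).symm
  | (k+1) => by
    rw [Finset.prod_Icc_succ_top (by omega), prodK l k]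
    have e1 : ∀ j ∈ Finset.Icc 1 l,
        ((l:ℚ)+(↑(k+1):ℚ)+(j:ℚ)-1)/((↑(k+1):ℚ)+(j:ℚ)-1)
          = ((↑(l+k):ℚ)+(j:ℚ))/((↑k:ℚ)+(j:ℚ)) := by
      intro j hj
      push_cast
      ring_nf
    rw [Finset.prod_congr rfl e1, Finset.prod_div_distrib, prodIcc (l+k) l, prodIcc k l]
    have hs := gQ_succ l l k
    have hd : gQ l l (k+1) = gQ l l k * (((l+l+k).factorial:ℚ) * (k.factorial:ℚ))
        / (((l+k).factorial:ℚ) * ((l+k).factorial:ℚ)) := by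
      rw [eq_div_iff (mul_ne_zero (fact_ne_zero _) (fact_ne_zero _))]
      linear_combination hs
    rw [hd, show l+k+l = l+l+k by omega, show k+l = l+k by omega,
        div_div_div_eq]
    ring


/-- For `l = n−k`, the Hankel determinant `det[binom(2l, l+i−j)]_{i,j=1,…,k}` equals the
triple product `∏_{h=1}^{l} ∏_{i=1}^{k} ∏_{j=1}^{l} (h+i+j−1)/(h+i+j−2)` (the entry is
`0` when `l+i−j < 0`, matching the vanishing of the binomial coefficient). -/
theorem stmt_19 (k l : ℕ) (hk : 1 ≤ k) (hl : 1 ≤ l) :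
    Matrix.det (Matrix.of fun i j : Fin k =>
        if (j : ℕ) ≤ l + (i : ℕ) then
          ((Nat.choose (2 * l) (l + ((i : ℕ) + 1) - ((j : ℕ) + 1))) : ℚ)
        else 0) =
      ∏ h ∈ Finset.Icc 1 l, ∏ i ∈ Finset.Icc 1 k, ∏ j ∈ Finset.Icc 1 l,
        (((h : ℚ) + (i : ℚ) + (j : ℚ) - 1) / ((h : ℚ) + (i : ℚ) + (j : ℚ) - 2)) := by
  obtain ⟨k', rfl⟩ : ∃ k', k = k'+1 := ⟨k-1, by omega⟩
  have hmat : (Matrix.of fun i j : Fin (k'+1) =>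
      if (j : ℕ) ≤ l + (i : ℕ) then
        ((Nat.choose (2 * l) (l + ((i : ℕ) + 1) - ((j : ℕ) + 1))) : ℚ)
      else 0) = Tm l l (k'+1) := by
    ext i j
    simp only [Matrix.of_apply, Tm, Ee]
    by_cases hij : (j : ℕ) ≤ l + (i : ℕ)
    · rw [if_pos hij, if_pos (by omega)]
      rw [show (((l:ℤ) + (i:ℤ) - (j:ℤ)).toNat) = l + ((i:ℕ)+1) - ((j:ℕ)+1) by omega]
    · rw [if_neg hij, if_neg (by omega)]
  rw [hmat, main l k' (l:ℤ), g_in l (k'+1) (l:ℤ) (by positivity) (by omega),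
      show ((l:ℤ)).toNat = l by omega, show 2*l - l = l by omega]
  have hr : (∏ h ∈ Finset.Icc 1 l, ∏ i ∈ Finset.Icc 1 (k'+1), ∏ j ∈ Finset.Icc 1 l,
      (((h : ℚ) + (i : ℚ) + (j : ℚ) - 1) / ((h : ℚ) + (i : ℚ) + (j : ℚ) - 2)))
      = gQ l l (k'+1) := by
    rw [Finset.prod_comm]
    rw [Finset.prod_congr rfl (fun i _ => Finset.prod_comm)]
    have inner : ∀ i ∈ Finset.Icc 1 (k'+1),
        (∏ j ∈ Finset.Icc 1 l, ∏ h ∈ Finset.Icc 1 l,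
          (((h : ℚ) + (i : ℚ) + (j : ℚ) - 1) / ((h : ℚ) + (i : ℚ) + (j : ℚ) - 2)))
        = ∏ j ∈ Finset.Icc 1 l, (((l:ℚ)+(i:ℚ)+(j:ℚ)-1)/((i:ℚ)+(j:ℚ)-1)) := by
      intro i hi
      refine Finset.prod_congr rfl (fun j hj => ?_)
      exact tele i j (Finset.mem_Icc.mp hi).1 (Finset.mem_Icc.mp hj).1 l
    rw [Finset.prod_congr rfl inner, prodK l (k'+1)]
  rw [hr]
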